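/- Let χ : A⊗B → B⊗A and ϖ : A⊗C → C⊗A be twisting maps with B, C finite dimensional with bases B = {b_1,…,b_n}, C = {c_1,…,c_m}, and let f : B → C be an algebra homomorphism. Then f⊗id_A : B⊗_χ A → C⊗_ϖ A is an algebra homomorphism if and only if φ_ϖ(a)·M = M·φ_χ(a) for all a ∈ A, where M ∈ M_{m×n}(A) is the matrix of f with respect to the bases (with entries scalar multiples of 1_A), and φ_χ, φ_ϖ are the associated matrix representations. -/

import Mathlib

open TensorProduct LinearMap

variable (K : Type*)

def IsTwistingMap {A B : Type*} [Field K] [Ring A] [Ring B] [Algebra K A] [Algebra K B]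
    (χ : A ⊗[K] B →ₗ[K] B ⊗[K] A) : Prop :=
  (∀ b : B, χ ((1 : A) ⊗ₜ[K] b) = b ⊗ₜ[K] (1 : A)) ∧
  (∀ a : A, χ (a ⊗ₜ[K] (1 : B)) = (1 : B) ⊗ₜ[K] a) ∧
  (∀ (a a' : A) (b : B),
    χ ((a * a') ⊗ₜ[K] b) =
      lTensor B (mul' K A)
        (TensorProduct.assoc K B A A
          (rTensor A χ
            ((TensorProduct.assoc K A B A).symm (a ⊗ₜ[K] χ (a' ⊗ₜ[K] b)))))) ∧
  (∀ (a : A) (b b' : B),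
    χ (a ⊗ₜ[K] (b * b')) =
      rTensor A (mul' K B)
        ((TensorProduct.assoc K B B A).symm
          (lTensor B χ
            (TensorProduct.assoc K B A B (χ (a ⊗ₜ[K] b) ⊗ₜ[K] b')))))

noncomputable def twistMul {A B : Type*} [Field K] [Ring A] [Ring B] [Algebra K A] [Algebra K B]
    (χ : A ⊗[K] B →ₗ[K] B ⊗[K] A) :
    (B ⊗[K] A) ⊗[K] (B ⊗[K] A) →ₗ[K] B ⊗[K] A :=
  TensorProduct.map (mul' K B) (mul' K A)
    ∘ₗ (TensorProduct.assoc K B B (A ⊗[K] A)).symm.toLinearMap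
    ∘ₗ lTensor B (TensorProduct.assoc K B A A).toLinearMap
    ∘ₗ lTensor B (rTensor A χ)
    ∘ₗ lTensor B (TensorProduct.assoc K A B A).symm.toLinearMap
    ∘ₗ (TensorProduct.assoc K B A (B ⊗[K] A)).toLinearMap

set_option synthInstance.maxHeartbeats 400000
set_option maxHeartbeats 1000000

lemma twistMul_tmul {A B : Type*} [Field K] [Ring A] [Ring B] [Algebra K A] [Algebra K B]
    (χ : A ⊗[K] B →ₗ[K] B ⊗[K] A) (b b' : B) (a a' : A) :
    twistMul K χ ((b ⊗ₜ[K] a) ⊗ₜ[K] (b' ⊗ₜ[K] a')) =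
      TensorProduct.map (mul' K B) (mul' K A)
        ((TensorProduct.assoc K B B (A ⊗[K] A)).symm
          (b ⊗ₜ[K] ((TensorProduct.assoc K B A A) (χ (a ⊗ₜ[K] b') ⊗ₜ[K] a')))) := by
  simp [twistMul]

lemma twistMul_basis {A B : Type*} [Field K] [Ring A] [Ring B] [Algebra K A] [Algebra K B]
    {n : ℕ} (bB : Module.Basis (Fin n) K B) (χ : A ⊗[K] B →ₗ[K] B ⊗[K] A)
    (γ : Fin n → Fin n → (A →ₗ[K] A))
    (hχ : ∀ (a : A) (i : Fin n), χ (a ⊗ₜ[K] bB i) = ∑ j : Fin n, bB j ⊗ₜ[K] γ i j a)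
    (b : B) (a a' : A) (i : Fin n) :
    twistMul K χ ((b ⊗ₜ[K] a) ⊗ₜ[K] (bB i ⊗ₜ[K] a')) =
      ∑ j : Fin n, (b * bB j) ⊗ₜ[K] (γ i j a * a') := by
  rw [twistMul_tmul, hχ]
  rw [TensorProduct.sum_tmul, map_sum, TensorProduct.tmul_sum, map_sum, map_sum]
  simp [TensorProduct.sum_tmul, TensorProduct.tmul_sum]

lemma normL {A B C : Type*} [Field K] [Ring A] [Ring B]
    [Ring C] [Algebra K A] [Algebra K B] [Algebra K C] {n m : ℕ}
    (bB : Module.Basis (Fin n) K B) (bC : Module.Basis (Fin m) K C)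
    (χ : A ⊗[K] B →ₗ[K] B ⊗[K] A)
    (γ : Fin n → Fin n → (A →ₗ[K] A))
    (hχ : ∀ (a : A) (i : Fin n), χ (a ⊗ₜ[K] bB i) = ∑ j : Fin n, bB j ⊗ₜ[K] γ i j a)
    (f : B →ₐ[K] C) (ζ : Fin m → Fin n → K)
    (hζ : ∀ j : Fin n, f (bB j) = ∑ i : Fin m, ζ i j • bC i)
    (b : B) (a a' : A) (i : Fin n) :
    TensorProduct.map f.toLinearMap LinearMap.id
        (twistMul K χ ((b ⊗ₜ[K] a) ⊗ₜ[K] (bB i ⊗ₜ[K] a'))) =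
      ∑ k : Fin m, (f b * bC k) ⊗ₜ[K] ((∑ j : Fin n, ζ k j • γ i j a) * a') := by
  rw [twistMul_basis K bB χ γ hχ, map_sum]
  simp only [TensorProduct.map_tmul, AlgHom.toLinearMap_apply, id_coe, id_eq, map_mul, hζ,
    Finset.mul_sum, mul_smul_comm, TensorProduct.sum_tmul, TensorProduct.smul_tmul]
  simp only [← smul_mul_assoc]
  rw [Finset.sum_comm]
  exact Finset.sum_congr rfl fun k _ => by
    rw [← TensorProduct.tmul_sum, ← Finset.sum_mul]

lemma normR {A B C : Type*} [Field K] [Ring A] [Ring B]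
    [Ring C] [Algebra K A] [Algebra K B] [Algebra K C] {n m : ℕ}
    (bB : Module.Basis (Fin n) K B) (bC : Module.Basis (Fin m) K C)
    (ϖ : A ⊗[K] C →ₗ[K] C ⊗[K] A)
    (tγ : Fin m → Fin m → (A →ₗ[K] A))
    (hϖ : ∀ (a : A) (i : Fin m), ϖ (a ⊗ₜ[K] bC i) = ∑ j : Fin m, bC j ⊗ₜ[K] tγ i j a)
    (f : B →ₐ[K] C) (ζ : Fin m → Fin n → K)
    (hζ : ∀ j : Fin n, f (bB j) = ∑ i : Fin m, ζ i j • bC i)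
    (b : B) (a a' : A) (i : Fin n) :
    twistMul K ϖ ((f b ⊗ₜ[K] a) ⊗ₜ[K] (f (bB i) ⊗ₜ[K] a')) =
      ∑ l : Fin m, (f b * bC l) ⊗ₜ[K] ((∑ k : Fin m, ζ k i • tγ k l a) * a') := by
  rw [hζ i, TensorProduct.sum_tmul, TensorProduct.tmul_sum, map_sum]
  simp only [← TensorProduct.smul_tmul', TensorProduct.tmul_smul, map_smul,
    twistMul_basis K bC ϖ tγ hϖ, Finset.smul_sum]
  simp only [← TensorProduct.tmul_smul, ← smul_mul_assoc]
  rw [Finset.sum_comm]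
  exact Finset.sum_congr rfl fun l _ => by
    rw [← TensorProduct.tmul_sum, ← Finset.sum_mul]

theorem algebra_morphism_iff_matrix_intertwiner {A B C : Type*} [Field K] [Ring A] [Ring B]
    [Ring C] [Algebra K A] [Algebra K B] [Algebra K C] {n m : ℕ}
    (bB : Module.Basis (Fin n) K B) (bC : Module.Basis (Fin m) K C)
    (χ : A ⊗[K] B →ₗ[K] B ⊗[K] A) (ϖ : A ⊗[K] C →ₗ[K] C ⊗[K] A)
    (hχtw : IsTwistingMap K χ) (hϖtw : IsTwistingMap K ϖ)
    (γ : Fin n → Fin n → (A →ₗ[K] A)) (tγ : Fin m → Fin m → (A →ₗ[K] A))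
    (hχ : ∀ (a : A) (i : Fin n), χ (a ⊗ₜ[K] bB i) = ∑ j : Fin n, bB j ⊗ₜ[K] γ i j a)
    (hϖ : ∀ (a : A) (i : Fin m), ϖ (a ⊗ₜ[K] bC i) = ∑ j : Fin m, bC j ⊗ₜ[K] tγ i j a)
    (f : B →ₐ[K] C) (ζ : Fin m → Fin n → K)
    (hζ : ∀ j : Fin n, f (bB j) = ∑ i : Fin m, ζ i j • bC i) :
    ((∀ x y : B ⊗[K] A,
        TensorProduct.map f.toLinearMap LinearMap.id (twistMul K χ (x ⊗ₜ[K] y)) =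
          twistMul K ϖ
            ((TensorProduct.map f.toLinearMap LinearMap.id x) ⊗ₜ[K]
              (TensorProduct.map f.toLinearMap LinearMap.id y))) ∧
      TensorProduct.map f.toLinearMap LinearMap.id ((1 : B) ⊗ₜ[K] (1 : A)) =
        (1 : C) ⊗ₜ[K] (1 : A)) ↔
      ∀ a : A,
        (Matrix.of fun j i : Fin m => tγ i j a) *
            (Matrix.of fun (i : Fin m) (j : Fin n) => algebraMap K A (ζ i j)) =
          (Matrix.of fun (i : Fin m) (j : Fin n) => algebraMap K A (ζ i j)) *
            (Matrix.of fun j i : Fin n => γ i j a) := by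
  constructor
  · rintro ⟨hmul, -⟩ a
    ext l i
    have h1 := hmul ((1 : B) ⊗ₜ[K] a) (bB i ⊗ₜ[K] (1 : A))
    simp only [TensorProduct.map_tmul, AlgHom.toLinearMap_apply, id_coe, id_eq] at h1
    rw [normL K bB bC χ γ hχ f ζ hζ 1 a 1 i, normR K bB bC ϖ tγ hϖ f ζ hζ 1 a 1 i] at h1
    simp only [map_one, one_mul, mul_one] at h1
    have h2 := congrArg (⇑((TensorProduct.lid K A).toLinearMap ∘ₗ (rTensor A (bC.coord l)))) h1
    simp only [map_sum, LinearMap.coe_comp, Function.comp_apply, rTensor_tmul,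
      Module.Basis.coord_apply, Module.Basis.repr_self, LinearEquiv.coe_coe, TensorProduct.lid_tmul,
      Finsupp.single_apply, ite_smul, one_smul, zero_smul, Finset.sum_ite_eq,
      Finset.mem_univ, if_true] at h2
    simp only [Matrix.mul_apply, Matrix.of_apply]
    simp only [Algebra.smul_def, Algebra.commutes] at h2
    simp only [Algebra.commutes]
    simp only [Finset.sum_ite_eq', Finset.mem_univ, if_true] at h2
    exact h2.symm
  · intro h
    refine ⟨?_, by simp⟩
    have hent : ∀ (a : A) (l : Fin m) (i : Fin n),
        ∑ j : Fin n, ζ l j • γ i j a = ∑ k : Fin m, ζ k i • tγ k l a := by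
      intro a l i
      have h3 : ∀ l' i', ((Matrix.of fun j i : Fin m => tγ i j a) *
            (Matrix.of fun (i : Fin m) (j : Fin n) => algebraMap K A (ζ i j))) l' i' =
          ((Matrix.of fun (i : Fin m) (j : Fin n) => algebraMap K A (ζ i j)) *
            (Matrix.of fun j i : Fin n => γ i j a)) l' i' := fun l' i' => by rw [h a]
      have h4 := h3 l i
      simp only [Matrix.mul_apply, Matrix.of_apply] at h4
      simp only [Algebra.smul_def, Algebra.commutes]
      simp only [Algebra.commutes] at h4
      exact h4.symm
    have key : ∀ (b : B) (a a' : A) (i : Fin n),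
        TensorProduct.map f.toLinearMap LinearMap.id
            (twistMul K χ ((b ⊗ₜ[K] a) ⊗ₜ[K] (bB i ⊗ₜ[K] a'))) =
          twistMul K ϖ ((f b ⊗ₜ[K] a) ⊗ₜ[K] ((f (bB i)) ⊗ₜ[K] a')) := by
      intro b a a' i
      rw [normL K bB bC χ γ hχ f ζ hζ b a a' i, normR K bB bC ϖ tγ hϖ f ζ hζ b a a' i]
      exact Finset.sum_congr rfl fun l _ => by rw [hent a l i]
    have key' : ∀ (b b' : B) (a a' : A),
        TensorProduct.map f.toLinearMap LinearMap.id
            (twistMul K χ ((b ⊗ₜ[K] a) ⊗ₜ[K] (b' ⊗ₜ[K] a'))) =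
          twistMul K ϖ ((f b ⊗ₜ[K] a) ⊗ₜ[K] ((f b') ⊗ₜ[K] a')) := by
      intro b b' a a'
      rw [← bB.sum_repr b']
      simp only [map_sum, TensorProduct.sum_tmul, TensorProduct.tmul_sum,
        ← TensorProduct.smul_tmul', TensorProduct.tmul_smul, map_smul, key]
    intro x y
    induction x using TensorProduct.induction_on with
    | zero => simp
    | tmul b a =>
      induction y using TensorProduct.induction_on with
      | zero => simp
      | tmul b' a' =>
        have := key' b b' a a'
        simpa [TensorProduct.map_tmul] using this
      | add y1 y2 h1 h2 => simp only [TensorProduct.tmul_add, map_add, h1, h2]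
    | add x1 x2 h1 h2 => simp only [TensorProduct.add_tmul, map_add, h1, h2]
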